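/- Let 𝕋 = ℝ/ℤ, let α ∈ 𝕋 be irrational, and let G be a subgroup of 𝕋 maximal with respect to not containing α. Then G is not a Haar-measurable null set in 𝕋; in fact if G were a measurable null set then 𝕋 would be a countable union of null sets, a contradiction. -/

import Mathlib

open MeasureTheory Pointwise

/-- Let `𝕋 = ℝ/ℤ`, `α ∈ 𝕋` irrational (of infinite order), and `G ≤ 𝕋` a subgroup maximal
with respect to not containing `α`. Then `G` is not a Haar-measurable null set in `𝕋`. -/
theorem maximal_subgroup_not_null
    (α : AddCircle (1 : ℝ)) (hα : ∀ n : ℤ, n ≠ 0 → n • α ≠ 0)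
    (G : AddSubgroup (AddCircle (1 : ℝ))) (hαG : α ∉ G)
    (hmax : ∀ H : AddSubgroup (AddCircle (1 : ℝ)), G ≤ H → α ∉ H → H = G) :
    ¬ (MeasurableSet (G : Set (AddCircle (1 : ℝ))) ∧
        volume (G : Set (AddCircle (1 : ℝ))) = 0) := by
  haveI : Fact ((0:ℝ) < 1) := ⟨one_pos⟩
  rintro ⟨hm, h0⟩
  set S : Set (AddCircle (1:ℝ)) := α +ᵥ (G : Set (AddCircle (1:ℝ))) with hS
  have hSm : MeasurableSet S := hm.const_vadd α
  have hS0 : volume S = 0 := by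
    rw [hS, measure_vadd]; exact h0
  -- key claim: every x ∉ G satisfies k • x ∈ S for some nonzero k
  have key : ∀ x : AddCircle (1:ℝ), x ∉ G → ∃ k : ℤ, k ≠ 0 ∧ k • x ∈ S := by
    intro x hx
    have hαH : α ∈ G ⊔ AddSubgroup.zmultiples x := by
      by_contra h
      have := hmax _ le_sup_left h
      rw [← this] at hx
      exact hx (AddSubgroup.mem_sup_right (AddSubgroup.mem_zmultiples x))
    rw [AddSubgroup.mem_sup] at hαH
    obtain ⟨g, hg, z, hz, hgz⟩ := hαH
    obtain ⟨k, rfl⟩ := AddSubgroup.mem_zmultiples_iff.mp hz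
    refine ⟨k, ?_, ?_⟩
    · rintro rfl
      simp only [zero_zsmul, add_zero] at hgz
      exact hαG (hgz ▸ hg)
    · refine ⟨-g, neg_mem hg, ?_⟩
      simp only [vadd_eq_add]
      rw [← hgz]; abel
  -- the cover
  have hcov : (Set.univ : Set (AddCircle (1:ℝ))) ⊆
      (G : Set (AddCircle (1:ℝ))) ∪ ⋃ k ∈ {k : ℤ | k ≠ 0}, (fun y : AddCircle (1:ℝ) => k • y) ⁻¹' S := by
    intro x _
    by_cases hx : x ∈ G
    · exact Or.inl hx
    · obtain ⟨k, hk, hkx⟩ := key x hx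
      exact Or.inr (Set.mem_biUnion hk hkx)
  -- each preimage is null
  have hnull : ∀ k ∈ {k : ℤ | k ≠ 0},
      volume ((fun y : AddCircle (1:ℝ) => k • y) ⁻¹' S) = 0 := by
    intro k hk
    have hmp : MeasurePreserving (fun y : AddCircle (1:ℝ) => k • y) volume volume :=
      Measure.measurePreserving_zsmul volume hk
    rw [hmp.measure_preimage hSm.nullMeasurableSet]
    exact hS0
  have hU : volume (⋃ k ∈ {k : ℤ | k ≠ 0}, (fun y : AddCircle (1:ℝ) => k • y) ⁻¹' S) = 0 :=
    measure_biUnion_null_iff (Set.to_countable _) |>.mpr hnull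
  have : volume (Set.univ : Set (AddCircle (1:ℝ))) = 0 := by
    refine le_antisymm ?_ zero_le
    calc volume (Set.univ : Set (AddCircle (1:ℝ)))
        ≤ volume ((G : Set (AddCircle (1:ℝ))) ∪
            ⋃ k ∈ {k : ℤ | k ≠ 0}, (fun y : AddCircle (1:ℝ) => k • y) ⁻¹' S) :=
          measure_mono hcov
      _ ≤ volume (G : Set (AddCircle (1:ℝ))) +
            volume (⋃ k ∈ {k : ℤ | k ≠ 0}, (fun y : AddCircle (1:ℝ) => k • y) ⁻¹' S) :=
          measure_union_le _ _
      _ = 0 := by rw [h0, hU, add_zero]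
  rw [AddCircle.measure_univ] at this
  simp at this
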